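/- arXiv:1806.02927 — 3 statements merged into one kernel-verified Lean document; each statement's English description precedes it below -/
import Mathlib

section
/- Let (e_t)_{t≥0} and (d_t)_{t≥0} be nonnegative sequences with η_t d_{t-1} ≤ (1 - η_t μ) e_{t-1} - e_t + η_t^2 σ^2 for all t ≥ 1, where η_t = 2/(μ(γ+t)) and γ > 0. Then for all T ≥ 1, (2/(T(2γ+T-1))) Σ_{t=1}^{T} (γ+t-1) d_{t-1} ≤ μγ(γ-1) e_0 / (T(2γ+T-1)) + 4σ^2/(μ(2γ+T-1)). -/
open Finset

private lemma key_step (ds es es' μ σ c : ℝ) (hμ : 0 < μ) (hc : 1 < c)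
    (hσ : 0 ≤ σ ^ 2)
    (h : (2 / (μ * c)) * ds ≤ (1 - (2 / (μ * c)) * μ) * es - es'
          + (2 / (μ * c)) ^ 2 * σ ^ 2) :
    (c - 1) * ds ≤ μ / 2 * (c - 2) * (c - 1) * es - μ / 2 * (c - 1) * c * es'
        + 2 * σ ^ 2 / μ := by
  have hc0 : 0 < c := by linarith
  have hμc : 0 < μ * c := mul_pos hμ hc0
  have hp : 0 < μ * c * (c - 1) / 2 := by nlinarith
  have h2 := mul_le_mul_of_nonneg_left h (le_of_lt hp)
  have hne : μ * c ≠ 0 := ne_of_gt hμc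
  have hμne : μ ≠ 0 := ne_of_gt hμ
  have hcne : c ≠ 0 := ne_of_gt hc0
  have e1 : μ * c * (c - 1) / 2 * ((2 / (μ * c)) * ds) = (c - 1) * ds := by
    field_simp
  have e2 : μ * c * (c - 1) / 2 * ((1 - (2 / (μ * c)) * μ) * es - es'
      + (2 / (μ * c)) ^ 2 * σ ^ 2)
      = μ / 2 * (c - 2) * (c - 1) * es - μ / 2 * (c - 1) * c * es'
        + 2 * (c - 1) / (μ * c) * σ ^ 2 := by
    field_simp
  rw [e1, e2] at h2
  have h3 : 2 * (c - 1) / (μ * c) * σ ^ 2 ≤ 2 * σ ^ 2 / μ := by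
    rw [div_mul_eq_mul_div, div_le_div_iff₀ hμc hμ]
    nlinarith
  linarith

theorem stmt_11 (e d : ℕ → ℝ) (μ σ γ : ℝ)
    (hμ : 0 < μ) (hγ : 0 < γ)
    (henn : ∀ t, 0 ≤ e t) (hdnn : ∀ t, 0 ≤ d t)
    (η : ℕ → ℝ) (hη : ∀ t, η t = 2 / (μ * (γ + t)))
    (hrec : ∀ t : ℕ, 1 ≤ t →
      η t * d (t - 1) ≤ (1 - η t * μ) * e (t - 1) - e t + (η t) ^ 2 * σ ^ 2) :
    ∀ T : ℕ, 1 ≤ T →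
      (2 / (T * (2 * γ + T - 1))) * ∑ t ∈ Icc 1 T, (γ + t - 1) * d (t - 1)
        ≤ μ * γ * (γ - 1) * e 0 / (T * (2 * γ + T - 1))
          + 4 * σ ^ 2 / (μ * (2 * γ + T - 1)) := by
  set g : ℕ → ℝ := fun n => μ / 2 * (γ + n - 1) * (γ + n) * e n with hg
  have hσ : 0 ≤ σ ^ 2 := sq_nonneg σ
  -- per-term estimate
  have step : ∀ s : ℕ, (γ + (s : ℝ)) * d s ≤ g s - g (s + 1) + 2 * σ ^ 2 / μ := by
    intro s
    have h := hrec (1 + s) (by omega)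
    rw [hη] at h
    simp only [Nat.add_sub_cancel_left] at h
    have hcast : ((1 + s : ℕ) : ℝ) = 1 + (s : ℝ) := by push_cast; ring
    rw [hcast] at h
    have hc : 1 < γ + (1 + (s : ℝ)) := by
      have : (0:ℝ) ≤ (s : ℝ) := Nat.cast_nonneg s
      linarith
    have hk := key_step (d s) (e s) (e (1 + s)) μ σ (γ + (1 + (s : ℝ))) hμ hc hσ h
    have h1s : (1 + s : ℕ) = s + 1 := by omega
    rw [h1s] at hk
    simp only [hg]
    push_cast
    push_cast at hk
    nlinarith [hk]
  -- telescoped bound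
  have main : ∀ T : ℕ, ∑ t ∈ Icc 1 T, (γ + (t : ℝ) - 1) * d (t - 1)
      ≤ g 0 - g T + T * (2 * σ ^ 2 / μ) := by
    intro T
    induction T with
    | zero => simp
    | succ n ih =>
        rw [Finset.sum_Icc_succ_top (by omega : 1 ≤ n + 1)]
        have hs := step n
        have hsimp : ((n + 1 : ℕ) - 1) = n := by omega
        rw [hsimp]
        push_cast
        push_cast at ih
        linarith
  intro T hT
  have hT1 : (1:ℝ) ≤ (T:ℝ) := by exact_mod_cast hT
  have hD2 : 0 < 2 * γ + (T:ℝ) - 1 := by linarith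
  have hD : 0 < (T:ℝ) * (2 * γ + (T:ℝ) - 1) := by positivity
  have hgT : 0 ≤ g T := by
    simp only [hg]
    have h1 : 0 ≤ γ + (T:ℝ) - 1 := by linarith
    have h2 : 0 ≤ γ + (T:ℝ) := by linarith
    have := henn T
    positivity
  have hS : ∑ t ∈ Icc 1 T, (γ + (t : ℝ) - 1) * d (t - 1)
      ≤ g 0 + T * (2 * σ ^ 2 / μ) := le_trans (main T) (by linarith)
  have hpos : 0 < 2 / ((T:ℝ) * (2 * γ + (T:ℝ) - 1)) := by positivity
  calc (2 / ((T:ℝ) * (2 * γ + (T:ℝ) - 1))) * ∑ t ∈ Icc 1 T, (γ + (t : ℝ) - 1) * d (t - 1)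
      ≤ (2 / ((T:ℝ) * (2 * γ + (T:ℝ) - 1))) * (g 0 + T * (2 * σ ^ 2 / μ)) :=
        mul_le_mul_of_nonneg_left hS (le_of_lt hpos)
    _ = μ * γ * (γ - 1) * e 0 / (T * (2 * γ + T - 1))
          + 4 * σ ^ 2 / (μ * (2 * γ + T - 1)) := by
        simp only [hg]
        have hTne : (T:ℝ) ≠ 0 := by linarith
        have hDne : (2 * γ + (T:ℝ) - 1) ≠ 0 := ne_of_gt hD2
        have hμne : μ ≠ 0 := ne_of_gt hμ
        push_cast
        field_simp
        ring
end

section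
/- Suppose each f_i : R^d → R (i = 1, ..., n) is μ-strongly convex and L-smooth, and let F = (1/n) Σ f_i with minimizer considerations. Then for all θ, θ*: ⟨∇F(θ), θ* - θ⟩ ≤ ((L-μ)/L)[F(θ*) - F(θ)] - (μ/2)||θ - θ*||^2 - (1/(2nL)) Σ_{i=1}^n ||∇f_i(θ) - ∇f_i(θ*)||^2 - (μ/L)⟨∇F(θ*), θ - θ*⟩. -/
open Finset
open scoped RealInnerProductSpace

lemma descent_lemma {d : ℕ} (f : EuclideanSpace ℝ (Fin d) → ℝ)
    (g : EuclideanSpace ℝ (Fin d) → EuclideanSpace ℝ (Fin d))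
    (hdiff : ∀ x, HasGradientAt f (g x) x)
    (L : ℝ) (hsmooth : ∀ x y, ‖g x - g y‖ ≤ L * ‖x - y‖) :
    ∀ x y, f y ≤ f x + ⟪g x, y - x⟫ + L / 2 * ‖y - x‖ ^ 2 := by
  intro x y
  set v := y - x with hv
  have hline : ∀ t : ℝ, HasDerivAt (fun t : ℝ => x + t • v) v t := by
    intro t
    simpa using ((hasDerivAt_id t).smul_const v).const_add x
  have hφ : ∀ t : ℝ, HasDerivAt (fun t : ℝ => f (x + t • v)) ⟪g (x + t • v), v⟫ t := by
    intro t
    have h1 := (hdiff (x + t • v)).hasFDerivAt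
    have h2 := h1.comp_hasDerivAt t (hline t)
    simpa [InnerProductSpace.toDual_apply_apply, Function.comp_def] using h2
  set ψ : ℝ → ℝ := fun t => f (x + t • v) - t * ⟪g x, v⟫ - L / 2 * ‖v‖ ^ 2 * t ^ 2 with hψdef
  have hψ : ∀ t : ℝ, HasDerivAt ψ
      (⟪g (x + t • v), v⟫ - ⟪g x, v⟫ - L / 2 * ‖v‖ ^ 2 * (2 * t)) t := by
    intro t
    have h2 : HasDerivAt (fun t : ℝ => t * ⟪g x, v⟫) ⟪g x, v⟫ t := by
      simpa using (hasDerivAt_id t).mul_const ⟪g x, v⟫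
    have h3 : HasDerivAt (fun t : ℝ => L / 2 * ‖v‖ ^ 2 * t ^ 2)
        (L / 2 * ‖v‖ ^ 2 * (2 * t)) t := by
      have := (hasDerivAt_pow 2 t).const_mul (L / 2 * ‖v‖ ^ 2)
      simpa [mul_comm, mul_assoc] using this
    exact ((hφ t).sub h2).sub h3
  have hmono : AntitoneOn ψ (Set.Icc 0 1) := by
    apply antitoneOn_of_deriv_nonpos (convex_Icc 0 1)
    · exact (Differentiable.continuous fun t => (hψ t).differentiableAt).continuousOn
    · exact fun t _ => (hψ t).differentiableAt.differentiableWithinAt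
    · intro t ht
      rw [interior_Icc] at ht
      rw [(hψ t).deriv]
      have hinner : ⟪g (x + t • v) - g x, v⟫ ≤ L * t * ‖v‖ ^ 2 := by
        calc ⟪g (x + t • v) - g x, v⟫ ≤ ‖g (x + t • v) - g x‖ * ‖v‖ := real_inner_le_norm _ _
        _ ≤ (L * ‖x + t • v - x‖) * ‖v‖ :=
            mul_le_mul_of_nonneg_right (hsmooth _ _) (norm_nonneg _)
        _ = L * t * ‖v‖ ^ 2 := by
            rw [add_sub_cancel_left, norm_smul, Real.norm_eq_abs, abs_of_pos ht.1]
            ring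
      rw [inner_sub_left] at hinner
      nlinarith [hinner]
  have h01 := hmono (Set.left_mem_Icc.2 zero_le_one) (Set.right_mem_Icc.2 zero_le_one) zero_le_one
  simp only [hψdef, zero_smul, add_zero, one_smul, zero_pow, one_pow, zero_mul, mul_zero,
    mul_one, sub_zero] at h01
  have e1 : x + v = y := by rw [hv]; abel
  rw [e1] at h01
  linarith

lemma key_ineq {d : ℕ} (f : EuclideanSpace ℝ (Fin d) → ℝ)
    (g : EuclideanSpace ℝ (Fin d) → EuclideanSpace ℝ (Fin d))
    (μ L : ℝ) (hμ : 0 < μ) (hμL : μ ≤ L)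
    (hsc : ∀ x y, f y ≥ f x + ⟪g x, y - x⟫ + μ / 2 * ‖y - x‖ ^ 2)
    (hsmooth : ∀ x y, ‖g x - g y‖ ≤ L * ‖x - y‖)
    (hdescent : ∀ x y, f y ≤ f x + ⟪g x, y - x⟫ + L / 2 * ‖y - x‖ ^ 2) :
    ∀ x y, L * ⟪g x, y - x⟫ ≤ (L - μ) * (f y - f x) - L * μ / 2 * ‖x - y‖ ^ 2
      - 1 / 2 * ‖g x - g y‖ ^ 2 + μ * ⟪g y, y - x⟫ := by
  intro x y
  rw [norm_sub_rev x y, norm_sub_rev (g x) (g y)]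
  set s := y - x with hs
  set Δ := g y - g x with hΔ
  have hv' : ⟪g y, s⟫ = ⟪g x, s⟫ + ⟪Δ, s⟫ := by
    have := inner_sub_left (𝕜 := ℝ) (g y) (g x) s
    rw [← hΔ] at this
    linarith
  rw [hv']
  set w := Δ - μ • s with hw
  have hΔ2 : ‖w‖ ^ 2 = ‖Δ‖ ^ 2 - 2 * (μ * ⟪Δ, s⟫) + μ ^ 2 * ‖s‖ ^ 2 := by
    rw [hw, norm_sub_sq_real, real_inner_smul_right, norm_smul, Real.norm_eq_abs, mul_pow, sq_abs]
  rcases eq_or_lt_of_le hμL with hEq | hLt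
  · -- μ = L
    subst hEq
    have h1 := hsc x y
    rw [← hs] at h1
    have h2 := hsc y x
    have hxy : x - y = -s := by rw [hs]; abel
    rw [hxy, inner_neg_right, norm_neg] at h2
    have hmono : μ * ‖s‖ ^ 2 ≤ ⟪Δ, s⟫ := by
      have := inner_sub_left (𝕜 := ℝ) (g y) (g x) s
      rw [← hΔ] at this
      linarith
    have hLip : ‖Δ‖ ≤ μ * ‖s‖ := by
      have := hsmooth y x
      rw [← hΔ, ← hs] at this
      exact this
    have hsq : ‖Δ‖ * ‖Δ‖ ≤ (μ * ‖s‖) * (μ * ‖s‖) :=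
      mul_self_le_mul_self (norm_nonneg _) hLip
    nlinarith [hmono, hμ, hsq]
  · -- μ < L
    have hK : 0 < L - μ := sub_pos.2 hLt
    set c := (L - μ)⁻¹ with hcdef
    set z := y - c • w with hz
    have ezx : z - x = s - c • w := by rw [hz, hs]; abel
    have ezy : z - y = -(c • w) := by rw [hz]; abel
    have e1 : ⟪g x, z - x⟫ = ⟪g x, s⟫ - c * ⟪g x, w⟫ := by
      rw [ezx, inner_sub_right, real_inner_smul_right]
    have e2 : ‖z - x‖ ^ 2 = ‖s‖ ^ 2 - 2 * (c * ⟪s, w⟫) + c ^ 2 * ‖w‖ ^ 2 := by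
      rw [ezx, norm_sub_sq_real, real_inner_smul_right, norm_smul, Real.norm_eq_abs, mul_pow,
        sq_abs]
    have e3 : ⟪g y, z - y⟫ = -(c * ⟪g y, w⟫) := by
      rw [ezy, inner_neg_right, real_inner_smul_right]
    have e4 : ‖z - y‖ ^ 2 = c ^ 2 * ‖w‖ ^ 2 := by
      rw [ezy, norm_neg, norm_smul, Real.norm_eq_abs, mul_pow, sq_abs]
    have e5 : ⟪g y, w⟫ = ⟪g x, w⟫ + ‖w‖ ^ 2 + μ * ⟪s, w⟫ := by
      have hΔw : ⟪Δ, w⟫ = ⟪g y, w⟫ - ⟪g x, w⟫ := by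
        have := inner_sub_left (𝕜 := ℝ) (g y) (g x) w
        rw [← hΔ] at this; exact this
      have hww : ⟪w, w⟫ = ⟪Δ, w⟫ - μ * ⟪s, w⟫ := by
        rw [hw, inner_sub_left, real_inner_smul_left]
      have hnn : ⟪w, w⟫ = ‖w‖ ^ 2 := real_inner_self_eq_norm_sq w
      linarith
    have h1 := hsc x z
    have h2 := hdescent y z
    have h12 : f x + (⟪g x, s⟫ - c * ⟪g x, w⟫)
        + μ / 2 * (‖s‖ ^ 2 - 2 * (c * ⟪s, w⟫) + c ^ 2 * ‖w‖ ^ 2)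
        ≤ f y + (-(c * (⟪g x, w⟫ + ‖w‖ ^ 2 + μ * ⟪s, w⟫))) + L / 2 * (c ^ 2 * ‖w‖ ^ 2) := by
      rw [← e1, ← e2, ← e5, ← e3, ← e4]
      linarith [h1, h2]
    have hKc : (L - μ) * c = 1 := mul_inv_cancel₀ (ne_of_gt hK)
    have hKc2W : (L - μ) * (c ^ 2 * ‖w‖ ^ 2) = c * ‖w‖ ^ 2 := by
      rw [pow_two, ← mul_assoc, ← mul_assoc, hKc, one_mul]
    have h13 : 0 ≤ f y - f x - ⟪g x, s⟫ - μ / 2 * ‖s‖ ^ 2 - c / 2 * ‖w‖ ^ 2 := by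
      linarith [h12, hKc2W]
    have h14 := mul_le_mul_of_nonneg_left h13 (le_of_lt hK)
    have hKcW : (L - μ) * (c * ‖w‖ ^ 2) = ‖w‖ ^ 2 := by
      rw [← mul_assoc, hKc, one_mul]
    linarith [h14, hKcW, hΔ2]

theorem stmt_16 {d n : ℕ} (hn : 0 < n)
    (f : Fin n → EuclideanSpace ℝ (Fin d) → ℝ)
    (g : Fin n → EuclideanSpace ℝ (Fin d) → EuclideanSpace ℝ (Fin d))
    (hdiff : ∀ i x, HasGradientAt (f i) (g i x) x)
    (μ L : ℝ) (hμ : 0 < μ) (hμL : μ ≤ L)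
    (hsc : ∀ i x y, f i y ≥ f i x + ⟪g i x, y - x⟫ + μ / 2 * ‖y - x‖ ^ 2)
    (hsmooth : ∀ i x y, ‖g i x - g i y‖ ≤ L * ‖x - y‖)
    (F : EuclideanSpace ℝ (Fin d) → ℝ) (hF : ∀ x, F x = (n : ℝ)⁻¹ * ∑ i, f i x)
    (gradF : EuclideanSpace ℝ (Fin d) → EuclideanSpace ℝ (Fin d))
    (hgradF : ∀ x, gradF x = (n : ℝ)⁻¹ • ∑ i, g i x) :
    ∀ θ θstar : EuclideanSpace ℝ (Fin d),
      ⟪gradF θ, θstar - θ⟫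
        ≤ (L - μ) / L * (F θstar - F θ) - μ / 2 * ‖θ - θstar‖ ^ 2
          - (1 / (2 * n * L)) * ∑ i, ‖g i θ - g i θstar‖ ^ 2
          - μ / L * ⟪gradF θstar, θ - θstar⟫ := by
  intro θ θstar
  have hL : 0 < L := lt_of_lt_of_le hμ hμL
  have hn' : (0 : ℝ) < n := by exact_mod_cast hn
  have hkey : ∀ i : Fin n, L * ⟪g i θ, θstar - θ⟫
      ≤ (L - μ) * (f i θstar - f i θ) - L * μ / 2 * ‖θ - θstar‖ ^ 2
        - 1 / 2 * ‖g i θ - g i θstar‖ ^ 2 + μ * ⟪g i θstar, θstar - θ⟫ := fun i =>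
    key_ineq (f i) (g i) μ L hμ hμL (hsc i) (hsmooth i)
      (descent_lemma (f i) (g i) (hdiff i) L (hsmooth i)) θ θstar
  set A := ∑ i, ⟪g i θ, θstar - θ⟫ with hA
  set B := ∑ i, f i θstar with hB
  set C := ∑ i, f i θ with hC
  set Dq := ∑ i, ‖g i θ - g i θstar‖ ^ 2 with hDq
  set Ee := ∑ i, ⟪g i θstar, θstar - θ⟫ with hE
  set q := ‖θ - θstar‖ ^ 2 with hq
  have hsum2 : L * A ≤ (L - μ) * (B - C) - (n : ℝ) * (L * μ / 2 * q) - 1 / 2 * Dq + μ * Ee := by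
    calc L * A = ∑ i, L * ⟪g i θ, θstar - θ⟫ := by rw [hA, Finset.mul_sum]
    _ ≤ ∑ i, ((L - μ) * (f i θstar - f i θ) - L * μ / 2 * q
          - 1 / 2 * ‖g i θ - g i θstar‖ ^ 2 + μ * ⟪g i θstar, θstar - θ⟫) :=
        Finset.sum_le_sum fun i _ => hkey i
    _ = (L - μ) * (B - C) - (n : ℝ) * (L * μ / 2 * q) - 1 / 2 * Dq + μ * Ee := by
        rw [Finset.sum_add_distrib, Finset.sum_sub_distrib, Finset.sum_sub_distrib,
          ← Finset.mul_sum, ← Finset.mul_sum, ← Finset.mul_sum, Finset.sum_sub_distrib,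
          Finset.sum_const, Finset.card_univ, Fintype.card_fin, nsmul_eq_mul,
          ← Finset.mul_sum, ← hB, ← hC, ← hDq, ← hE]
        ring
  have hgF1 : ⟪gradF θ, θstar - θ⟫ = (n : ℝ)⁻¹ * A := by
    rw [hgradF θ, real_inner_smul_left, sum_inner]
  have hgF2 : ⟪gradF θstar, θ - θstar⟫ = -((n : ℝ)⁻¹ * Ee) := by
    rw [hgradF θstar, real_inner_smul_left, sum_inner]
    rw [show ∑ i, ⟪g i θstar, θ - θstar⟫ = -Ee by
      rw [hE, ← Finset.sum_neg_distrib]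
      refine Finset.sum_congr rfl fun i _ => ?_
      rw [show θ - θstar = -(θstar - θ) by abel, inner_neg_right]]
    ring
  rw [hgF1, hgF2, hF θstar, hF θ]
  have h := mul_le_mul_of_nonneg_left hsum2 (le_of_lt (inv_pos.2 (mul_pos hn' hL)))
  have eqL : ((n : ℝ) * L)⁻¹ * (L * A) = (n : ℝ)⁻¹ * A := by
    field_simp
  have eqR : ((n : ℝ) * L)⁻¹ * ((L - μ) * (B - C) - (n : ℝ) * (L * μ / 2 * q) - 1 / 2 * Dq + μ * Ee)
      = (L - μ) / L * ((n : ℝ)⁻¹ * B - (n : ℝ)⁻¹ * C) - μ / 2 * q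
        - 1 / (2 * n * L) * Dq - μ / L * -((n : ℝ)⁻¹ * Ee) := by
    field_simp
    ring
  linarith [h, eqL, eqR]
end

section
/- Let s_t be defined by s_1 = 0 and s_{t+1} = (1 - β_t) s_t + β_t b_t, where b_t are i.i.d. nonnegative random variables with mean m and variance at most σ_b^2, and β_t = 1/t^{c} with 1/2 < c ≤ 1. Then E[(s_t - m)^2] ≤ σ_b^2/(t-1)^{c} for all t ≥ 2, and hence E[s_t^2] ≤ m^2 + σ_b^2/(t-1)^{c}. -/
open MeasureTheory ProbabilityTheory

private lemma rpow_sub_one_le' {t : ℕ} (ht : 2 ≤ t) {c : ℝ} (hc0 : 0 ≤ c) (hc2 : c ≤ 1) :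
    (t : ℝ) ^ c - 1 ≤ ((t : ℝ) - 1) ^ c := by
  set x : ℝ := (t : ℝ) - 1 with hx
  have hx0 : 0 ≤ x := by
    have : (2 : ℝ) ≤ (t : ℝ) := by exact_mod_cast ht
    simp [hx]; linarith
  have hxt : (t : ℝ) = x + 1 := by ring
  have h := NNReal.rpow_add_le_add_rpow (Real.toNNReal x) 1 hc0 hc2
  have h2 := NNReal.coe_le_coe.2 h
  simp only [NNReal.coe_rpow, NNReal.coe_add, Real.coe_toNNReal x hx0, NNReal.coe_one,
    Real.one_rpow] at h2
  rw [hxt]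
  linarith

theorem stmt_18 {Ω : Type*} [MeasurableSpace Ω] (μP : Measure Ω) [IsProbabilityMeasure μP]
    (b : ℕ → Ω → ℝ) (m σb : ℝ) (hσb : 0 ≤ σb)
    (hmeas : ∀ t, Measurable (b t))
    (hnn : ∀ t ω, 0 ≤ b t ω)
    (hindep : iIndepFun b μP)
    (hident : ∀ i j, Measure.map (b i) μP = Measure.map (b j) μP)
    (hInt : ∀ t, Integrable (b t) μP)
    (hmean : ∀ t, ∫ ω, b t ω ∂μP = m)
    (hvarInt : ∀ t, Integrable (fun ω => (b t ω - m) ^ 2) μP)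
    (hvar : ∀ t, ∫ ω, (b t ω - m) ^ 2 ∂μP ≤ σb ^ 2)
    (c : ℝ) (hc1 : 1 / 2 < c) (hc2 : c ≤ 1)
    (β : ℕ → ℝ) (hβ : ∀ t : ℕ, β t = 1 / (t : ℝ) ^ c)
    (s : ℕ → Ω → ℝ) (hs1 : ∀ ω, s 1 ω = 0)
    (hrec : ∀ t : ℕ, 1 ≤ t → ∀ ω, s (t + 1) ω = (1 - β t) * s t ω + β t * b t ω) :
    ∀ t : ℕ, 2 ≤ t →
      (∫ ω, (s t ω - m) ^ 2 ∂μP ≤ σb ^ 2 / ((t : ℝ) - 1) ^ c)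
      ∧ (∫ ω, (s t ω) ^ 2 ∂μP ≤ m ^ 2 + σb ^ 2 / ((t : ℝ) - 1) ^ c) := by
  have hc0 : (0 : ℝ) < c := by linarith
  have hm0 : 0 ≤ m := by
    rw [← hmean 0]
    exact integral_nonneg (hnn 0)
  have hβpos : ∀ t : ℕ, 1 ≤ t → 0 < β t := by
    intro t ht
    rw [hβ]
    have : (0:ℝ) < (t:ℝ) ^ c := Real.rpow_pos_of_pos (by exact_mod_cast ht) c
    positivity
  have hβle : ∀ t : ℕ, 1 ≤ t → β t ≤ 1 := by
    intro t ht
    rw [hβ]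
    have h1 : (1:ℝ) ≤ (t:ℝ) ^ c :=
      Real.one_le_rpow (by exact_mod_cast ht) hc0.le
    rw [div_le_one (by linarith)]
    linarith
  -- representation of s t as a measurable function of b 0, ..., b (t-1)
  have hrep : ∀ t : ℕ, 1 ≤ t → ∃ F : (↥(Finset.range t) → ℝ) → ℝ,
      Measurable F ∧ ∀ ω, s t ω = F (fun i => b i ω) := by
    intro t ht
    induction t with
    | zero => omega
    | succ n ih =>
      rcases Nat.lt_or_ge n 1 with h1 | h1
      · have hn : n = 0 := by omega
        subst hn
        exact ⟨fun _ => 0, measurable_const, fun ω => hs1 ω⟩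
      · obtain ⟨F, hF, hFs⟩ := ih h1
        refine ⟨fun g => (1 - β n) * F (fun i =>
            g ⟨i.1, Finset.mem_range.2 (Nat.lt_succ_of_lt (Finset.mem_range.1 i.2))⟩)
            + β n * g ⟨n, Finset.self_mem_range_succ n⟩, ?_, ?_⟩
        · exact (measurable_const.mul (hF.comp
            (measurable_pi_lambda _ (fun i => measurable_pi_apply _)))).add
            (measurable_const.mul (measurable_pi_apply _))
        · intro ω
          rw [hrec n h1 ω, hFs ω]
  have hsmeas : ∀ t : ℕ, 1 ≤ t → Measurable (s t) := by
    intro t ht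
    obtain ⟨F, hF, hFs⟩ := hrep t ht
    have he : s t = fun ω => F (fun i => b i ω) := funext hFs
    rw [he]
    exact hF.comp (measurable_pi_lambda _ (fun i => hmeas _))
  -- independence of s t and b t
  have hsind : ∀ t : ℕ, 1 ≤ t → IndepFun (s t) (b t) μP := by
    intro t ht
    obtain ⟨F, hF, hFs⟩ := hrep t ht
    have hdisj : Disjoint (Finset.range t) ({t} : Finset ℕ) := by simp
    have h := hindep.indepFun_finset (Finset.range t) {t} hdisj hmeas
    have h2 := h.comp hF (show Measurable fun g : (↥({t} : Finset ℕ) → ℝ) =>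
      g ⟨t, Finset.mem_singleton_self t⟩ from measurable_pi_apply _)
    have e1 : s t = (F ∘ fun ω (i : ↥(Finset.range t)) => b i ω) := funext hFs
    rw [e1]
    exact h2
  have hsindc : ∀ t : ℕ, 1 ≤ t →
      IndepFun (fun ω => s t ω - m) (fun ω => b t ω - m) μP := by
    intro t ht
    exact (hsind t ht).comp (measurable_id.sub measurable_const)
      (measurable_id.sub measurable_const)
  have hbm0 : ∀ t : ℕ, ∫ ω, (b t ω - m) ∂μP = 0 := by
    intro t
    rw [integral_sub (hInt t) (integrable_const m), hmean t, integral_const]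
    simp
  -- the analytic facts by induction
  have hfacts : ∀ t : ℕ, 1 ≤ t →
      Integrable (fun ω => (s t ω - m) ^ 2) μP ∧ Integrable (s t) μP ∧
      0 ≤ ∫ ω, s t ω ∂μP ∧ ∫ ω, s t ω ∂μP ≤ m := by
    intro t ht
    induction t with
    | zero => omega
    | succ n ih =>
      rcases Nat.lt_or_ge n 1 with h1 | h1
      · have hn : n = 0 := by omega
        subst hn
        have e0 : s 1 = fun _ => (0:ℝ) := funext hs1
        refine ⟨?_, ?_, ?_, ?_⟩
        · have he : (fun ω => (s 1 ω - m) ^ 2) = fun _ => (0 - m)^2 := by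
            funext ω; rw [hs1 ω]
          rw [he]; exact integrable_const _
        · rw [e0]; exact integrable_const _
        · rw [e0]; simp
        · rw [e0]; simpa using hm0
      · obtain ⟨hI2, hIs, hs0, hsm⟩ := ih h1
        have hIsm : Integrable (fun ω => s n ω - m) μP := hIs.sub (integrable_const m)
        have hIbm : Integrable (fun ω => b n ω - m) μP := (hInt n).sub (integrable_const m)
        have hIcross : Integrable (fun ω => (s n ω - m) * (b n ω - m)) μP :=
          (hsindc n h1).integrable_mul hIsm hIbm
        have heq : (fun ω => (s (n+1) ω - m) ^ 2) = fun ω =>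
            (1 - β n)^2 * (s n ω - m)^2 +
            ((2 * β n * (1 - β n)) * ((s n ω - m) * (b n ω - m)) +
            (β n)^2 * (b n ω - m)^2) := by
          funext ω
          rw [hrec n h1 ω]
          ring
        have heqs : s (n+1) = fun ω => (1 - β n) * s n ω + β n * b n ω := by
          funext ω; exact hrec n h1 ω
        have hI2' : Integrable (fun ω => (2 * β n * (1 - β n)) * ((s n ω - m) * (b n ω - m)) +
            (β n)^2 * (b n ω - m)^2) μP :=
          (hIcross.const_mul _).add ((hvarInt n).const_mul _)
        have hIsnew : Integrable (s (n+1)) μP := by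
          rw [heqs]
          exact (hIs.const_mul _).add ((hInt n).const_mul _)
        have hIntEq : ∫ ω, s (n+1) ω ∂μP = (1 - β n) * (∫ ω, s n ω ∂μP) + β n * m := by
          rw [heqs]
          rw [integral_add (f := fun ω => (1 - β n) * s n ω) (g := fun ω => β n * b n ω)
            (hIs.const_mul _) ((hInt n).const_mul _), integral_const_mul, integral_const_mul,
            hmean n]
        have hb1 : 0 ≤ 1 - β n := by linarith [hβle n h1]
        have hbp := hβpos n h1
        refine ⟨?_, hIsnew, ?_, ?_⟩
        · rw [heq]
          exact (hI2.const_mul _).add hI2'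
        · rw [hIntEq]; nlinarith
        · rw [hIntEq]; nlinarith
  -- recursion for the variance
  have hrecV : ∀ t : ℕ, 1 ≤ t →
      ∫ ω, (s (t+1) ω - m) ^ 2 ∂μP =
        (1 - β t)^2 * ∫ ω, (s t ω - m) ^ 2 ∂μP + (β t)^2 * ∫ ω, (b t ω - m) ^ 2 ∂μP := by
    intro t ht
    obtain ⟨hI2, hIs, _, _⟩ := hfacts t ht
    have hIsm : Integrable (fun ω => s t ω - m) μP := hIs.sub (integrable_const m)
    have hIbm : Integrable (fun ω => b t ω - m) μP := (hInt t).sub (integrable_const m)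
    have hIcross : Integrable (fun ω => (s t ω - m) * (b t ω - m)) μP :=
      (hsindc t ht).integrable_mul hIsm hIbm
    have heq : (fun ω => (s (t+1) ω - m) ^ 2) = fun ω =>
        (1 - β t)^2 * (s t ω - m)^2 +
        ((2 * β t * (1 - β t)) * ((s t ω - m) * (b t ω - m)) +
        (β t)^2 * (b t ω - m)^2) := by
      funext ω
      rw [hrec t ht ω]
      ring
    have hcross0 : ∫ ω, (s t ω - m) * (b t ω - m) ∂μP = 0 := by
      rw [(hsindc t ht).integral_fun_mul_eq_mul_integral hIsm.aestronglyMeasurable hIbm.aestronglyMeasurable,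
        hbm0 t]
      ring
    calc ∫ ω, (s (t+1) ω - m) ^ 2 ∂μP
        = ∫ ω, ((1 - β t)^2 * (s t ω - m)^2 +
            ((2 * β t * (1 - β t)) * ((s t ω - m) * (b t ω - m)) +
            (β t)^2 * (b t ω - m)^2)) ∂μP := by rw [heq]
      _ = (1 - β t)^2 * (∫ ω, (s t ω - m)^2 ∂μP) +
            ((2 * β t * (1 - β t)) * (∫ ω, (s t ω - m) * (b t ω - m) ∂μP) +
            (β t)^2 * ∫ ω, (b t ω - m)^2 ∂μP) := by
          rw [integral_add (f := fun ω => (1 - β t)^2 * (s t ω - m)^2)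
            (g := fun ω => (2 * β t * (1 - β t)) * ((s t ω - m) * (b t ω - m)) +
              (β t)^2 * (b t ω - m)^2)
            (hI2.const_mul _) ((hIcross.const_mul _).add ((hvarInt t).const_mul _)),
            integral_add (f := fun ω => (2 * β t * (1 - β t)) * ((s t ω - m) * (b t ω - m)))
            (g := fun ω => (β t)^2 * (b t ω - m)^2)
            (hIcross.const_mul _) ((hvarInt t).const_mul _),
            integral_const_mul, integral_const_mul, integral_const_mul]
      _ = _ := by rw [hcross0]; ring
  -- variance bound by induction
  have hV : ∀ t : ℕ, 2 ≤ t → ∫ ω, (s t ω - m) ^ 2 ∂μP ≤ σb ^ 2 / ((t : ℝ) - 1) ^ c := by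
    intro t ht
    induction t with
    | zero => omega
    | succ n ih =>
      rcases Nat.lt_or_ge n 2 with h2 | h2
      · -- n = 1, t = 2
        have hn : n = 1 := by omega
        subst hn
        have hβ1 : β 1 = 1 := by rw [hβ]; simp
        rw [hrecV 1 le_rfl, hβ1]
        have hVs1 : ∫ ω, (s 1 ω - m) ^ 2 ∂μP = m ^ 2 := by
          have he : (fun ω => (s 1 ω - m) ^ 2) = fun _ => m^2 := by
            funext ω; rw [hs1 ω]; ring
          rw [he, integral_const]; simp
        rw [hVs1]
        have hc' : ((1:ℕ) + 1 : ℕ) = 2 := rfl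
        have h21 : (((1:ℕ) + 1 : ℕ) : ℝ) - 1 = 1 := by norm_num
        rw [h21, Real.one_rpow]
        simpa using hvar 1
      · -- n ≥ 2
        have hVn := ih h2
        have h1 : 1 ≤ n := by omega
        rw [hrecV n h1]
        have hβn : β n = 1 / (n : ℝ) ^ c := hβ n
        have hn1 : (1:ℝ) ≤ (n:ℝ) := by exact_mod_cast h1
        have hn2 : (2:ℝ) ≤ (n:ℝ) := by exact_mod_cast h2
        set a : ℝ := (n : ℝ) ^ c with ha
        set v : ℝ := ((n : ℝ) - 1) ^ c with hv
        have ha1 : 1 ≤ a := Real.one_le_rpow hn1 hc0.le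
        have hvpos : 0 < v := Real.rpow_pos_of_pos (by linarith) c
        have hkey : a - 1 ≤ v := by
          have h := rpow_sub_one_le' h2 hc0.le hc2
          rw [← ha, ← hv] at h
          linarith
        have hVbound : ∫ ω, (b n ω - m) ^ 2 ∂μP ≤ σb ^ 2 := hvar n
        have hcast : ((n + 1 : ℕ) : ℝ) - 1 = (n : ℝ) := by push_cast; ring
        rw [hcast, ← ha]
        have hapos : (0:ℝ) < a := by linarith
        have hstep1 : (1 - β n)^2 * (∫ ω, (s n ω - m) ^ 2 ∂μP) ≤
            (1 - β n)^2 * (σb ^ 2 / v) :=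
          mul_le_mul_of_nonneg_left hVn (sq_nonneg _)
        have hstep2 : (β n)^2 * (∫ ω, (b n ω - m) ^ 2 ∂μP) ≤ (β n)^2 * σb^2 :=
          mul_le_mul_of_nonneg_left hVbound (sq_nonneg _)
        have hnum : (1 - β n)^2 * (σb ^ 2 / v) + (β n)^2 * σb^2 ≤ σb^2 / a := by
          rw [hβn]
          have e1 : (1 - 1/a)^2 * (σb^2 / v) + (1/a)^2 * σb^2 =
              σb^2 * ((a-1)^2 + v) / (a^2 * v) := by
            field_simp
          have e2 : σb^2 / a = σb^2 * (a * v) / (a^2 * v) := by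
            field_simp
          rw [e1, e2]
          have h5 : (a-1)^2 + v ≤ a * v := by nlinarith
          gcongr
        linarith
  intro t ht
  have ht1 : 1 ≤ t := by omega
  obtain ⟨hI2, hIs, hs0, hsm⟩ := hfacts t ht1
  refine ⟨hV t ht, ?_⟩
  have heq : (fun ω => (s t ω) ^ 2) = fun ω =>
      (s t ω - m)^2 + ((2*m) * s t ω + (-(m^2))) := by
    funext ω; ring
  have hstep : ∫ ω, (s t ω) ^ 2 ∂μP = (∫ ω, (s t ω - m)^2 ∂μP) +
      ((2*m) * (∫ ω, s t ω ∂μP) + (-(m^2))) := by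
    rw [heq, integral_add (f := fun ω => (s t ω - m)^2)
      (g := fun ω => (2*m) * s t ω + (-(m^2)))
      hI2 ((hIs.const_mul _).add (integrable_const _)),
      integral_add (f := fun ω => (2*m) * s t ω) (g := fun _ => (-(m^2)))
      (hIs.const_mul _) (integrable_const _), integral_const_mul, integral_const]
    simp
  rw [hstep]
  have h1 : 2 * m * ∫ ω, s t ω ∂μP ≤ 2 * m * m := by
    apply mul_le_mul_of_nonneg_left hsm (by linarith)
  have h2 := hV t ht
  nlinarith
end
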